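/- Let g : ℝ → (0,∞) be integrable, decreasing on (0,∞), and even. Let Fg denote its Fourier transform. Then for all x ∈ ℝ, Fg(0) - Fg(x) ≥ (1/2)∫₀^∞ min(ξ²x², 4) g(ξ) dξ. -/

import Mathlib

open MeasureTheory Set
open Real

lemma lemC {u : ℝ} (h0 : 0 ≤ u) (h2 : u ≤ 2) : Real.cos u + u ^ 2 / 4 ≤ 1 := by
  rcases eq_or_lt_of_le h0 with rfl | hu
  · simp
  · have hv : 0 < u / 2 := by linarith
    have hv1 : u / 2 ≤ 1 := by linarith
    have hs := Real.sin_gt_sub_cube hv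
    have hsq : Real.sin (u / 2) ^ 2 = 1 / 2 - Real.cos u / 2 := by
      have := Real.sin_sq_eq_half_sub (x := u / 2)
      rwa [show 2 * (u / 2) = u by ring] at this
    have hv2 : (u / 2) ^ 2 ≤ 1 := by nlinarith
    have hcube : (u / 2) ^ 3 ≤ (u / 2) := by nlinarith
    have h34 : (3 / 4 : ℝ) * (u / 2) ≤ Real.sin (u / 2) := by nlinarith
    nlinarith [sq_nonneg (Real.sin (u / 2)), sq_nonneg (u/2)]

lemma lemB {u : ℝ} (h0 : 0 ≤ u) (h2 : u ≤ 2) : Real.sin u + u ^ 3 / 12 ≤ u := by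
  set F : ℝ → ℝ := fun u => u - Real.sin u - u ^ 3 / 12 with hF
  have hder : ∀ y : ℝ, HasDerivAt F (1 - Real.cos y - y ^ 2 / 4) y := by
    intro y
    have h1 : HasDerivAt (fun y : ℝ => y) 1 y := hasDerivAt_id y
    have h2 : HasDerivAt Real.sin (Real.cos y) y := Real.hasDerivAt_sin y
    have h3 : HasDerivAt (fun y : ℝ => y ^ 3 / 12) (3 * y ^ 2 / 12) y := by
      simpa using ((hasDerivAt_pow 3 y).div_const 12)
    have := (h1.sub h2).sub h3
    refine this.congr_deriv ?_
    ring
  have hmono : MonotoneOn F (Icc (0:ℝ) 2) := by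
    apply monotoneOn_of_deriv_nonneg (convex_Icc 0 2)
    · exact fun y _ => ((hder y).continuousAt).continuousWithinAt
    · exact fun y _ => ((hder y).differentiableAt).differentiableWithinAt
    · intro y hy
      rw [interior_Icc] at hy
      rw [(hder y).deriv]
      have := lemC (u := y) hy.1.le hy.2.le
      linarith
  have h00 : F 0 = 0 := by simp [hF]
  have := hmono (left_mem_Icc.mpr (by norm_num)) ⟨h0, h2⟩ h0
  rw [h00] at this
  simp only [hF] at this
  linarith

lemma lemA {x : ℝ} (hx : 0 < x) {r : ℝ} (hr : 0 ≤ r) :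
    (0:ℝ) ≤ ∫ ξ in (0:ℝ)..r, (1 - Real.cos (x * ξ) - min (ξ ^ 2 * x ^ 2) 4 / 4) := by
  have hcc : Continuous fun ξ : ℝ => Real.cos (x * ξ) := by fun_prop
  have hcont1 : Continuous fun ξ : ℝ => 1 - Real.cos (x * ξ) := by fun_prop
  have hcont2 : Continuous fun ξ : ℝ => min (ξ ^ 2 * x ^ 2) 4 / 4 :=
    (((continuous_pow 2).mul continuous_const).min continuous_const).div_const 4
  rw [intervalIntegral.integral_sub (hcont1.intervalIntegrable _ _)
    (hcont2.intervalIntegrable _ _)]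
  have hcosint : (∫ ξ in (0:ℝ)..r, Real.cos (x * ξ)) = Real.sin (x * r) / x := by
    rw [intervalIntegral.integral_comp_mul_left Real.cos hx.ne', mul_zero, integral_cos,
      Real.sin_zero, sub_zero, smul_eq_mul, inv_mul_eq_div]
  have hI1 : (∫ ξ in (0:ℝ)..r, (1 - Real.cos (x * ξ))) = r - Real.sin (x * r) / x := by
    rw [intervalIntegral.integral_sub intervalIntegrable_const (hcc.intervalIntegrable _ _),
      hcosint, intervalIntegral.integral_const]
    simp
  rw [hI1]
  -- now compute the min integral
  rcases le_or_gt r (2 / x) with hcase | hcase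
  · have hmin : ∀ ξ ∈ uIcc (0:ℝ) r, min (ξ ^ 2 * x ^ 2) 4 / 4 = ξ ^ 2 * x ^ 2 / 4 := by
      intro ξ hξ
      rw [uIcc_of_le hr, mem_Icc] at hξ
      rw [min_eq_left]
      have h1 : ξ * x ≤ 2 := by
        calc ξ * x ≤ (2 / x) * x := by nlinarith [hξ.2, hcase, hx]
          _ = 2 := by field_simp
      nlinarith [mul_nonneg hξ.1 hx.le, h1]
    rw [intervalIntegral.integral_congr hmin]
    have : (∫ ξ in (0:ℝ)..r, ξ ^ 2 * x ^ 2 / 4) = r ^ 3 * x ^ 2 / 12 := by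
      have : (∫ ξ in (0:ℝ)..r, ξ ^ 2 * x ^ 2 / 4)
          = (∫ ξ in (0:ℝ)..r, ξ ^ 2) * (x ^ 2 / 4) := by
        rw [← intervalIntegral.integral_mul_const]
        congr 1; ext ξ; ring
      rw [this, integral_pow]
      ring
    rw [this]
    have hB := lemB (u := x * r) (by positivity) (by
      calc x * r ≤ x * (2 / x) := by nlinarith
        _ = 2 := by field_simp)
    have hkey : r - Real.sin (x * r) / x - r ^ 3 * x ^ 2 / 12
        = (x * r - Real.sin (x * r) - (x * r) ^ 3 / 12) / x := by
      field_simp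
    linarith [div_nonneg (by linarith : (0:ℝ) ≤ x * r - Real.sin (x * r) - (x * r) ^ 3 / 12) hx.le]
  · have hc : 0 < 2 / x := by positivity
    have hsplit : (∫ ξ in (0:ℝ)..r, min (ξ ^ 2 * x ^ 2) 4 / 4)
        = (∫ ξ in (0:ℝ)..(2/x), min (ξ ^ 2 * x ^ 2) 4 / 4)
          + ∫ ξ in (2/x)..r, min (ξ ^ 2 * x ^ 2) 4 / 4 := by
      rw [intervalIntegral.integral_add_adjacent_intervals (hcont2.intervalIntegrable _ _)
        (hcont2.intervalIntegrable _ _)]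
    have hI21 : (∫ ξ in (0:ℝ)..(2/x), min (ξ ^ 2 * x ^ 2) 4 / 4) = 2 / (3 * x) := by
      have hmin : ∀ ξ ∈ uIcc (0:ℝ) (2/x), min (ξ ^ 2 * x ^ 2) 4 / 4 = ξ ^ 2 * x ^ 2 / 4 := by
        intro ξ hξ
        rw [uIcc_of_le hc.le, mem_Icc] at hξ
        rw [min_eq_left]
        have h1 : ξ * x ≤ 2 := by
          calc ξ * x ≤ (2 / x) * x := by nlinarith [hξ.2, hx]
            _ = 2 := by field_simp
        nlinarith [mul_nonneg hξ.1 hx.le, h1]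
      rw [intervalIntegral.integral_congr hmin]
      have : (∫ ξ in (0:ℝ)..(2/x), ξ ^ 2 * x ^ 2 / 4)
          = (∫ ξ in (0:ℝ)..(2/x), ξ ^ 2) * (x ^ 2 / 4) := by
        rw [← intervalIntegral.integral_mul_const]
        congr 1; ext ξ; ring
      rw [this, integral_pow]
      field_simp
      have hx' : x * (2 / x) = 2 := by field_simp
      linear_combination 3 * ((x * (2 / x)) ^ 2 + 2 * (x * (2 / x)) + 4) * hx'
    have hI22 : (∫ ξ in (2/x)..r, min (ξ ^ 2 * x ^ 2) 4 / 4) = r - 2 / x := by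
      have hmin : ∀ ξ ∈ uIcc (2/x) r, min (ξ ^ 2 * x ^ 2) 4 / 4 = 1 := by
        intro ξ hξ
        rw [uIcc_of_le hcase.le, mem_Icc] at hξ
        rw [min_eq_right]
        · norm_num
        have h1 : 2 ≤ ξ * x := by
          calc (2:ℝ) = (2 / x) * x := by field_simp
            _ ≤ ξ * x := by nlinarith [hξ.1, hx]
        nlinarith
      rw [intervalIntegral.integral_congr hmin, intervalIntegral.integral_const]
      simp
    rw [hsplit, hI21, hI22]
    have hs : Real.sin (x * r) ≤ 1 := Real.sin_le_one _
    have hkey : r - Real.sin (x * r) / x - (2 / (3 * x) + (r - 2 / x))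
        = (4 / 3 - Real.sin (x * r)) / x := by
      field_simp
      ring
    rw [hkey]
    apply div_nonneg (by linarith) hx.le

lemma core (g : ℝ → ℝ) (hpos : ∀ ξ : ℝ, 0 < g ξ) (hint : Integrable g)
    (hmono : AntitoneOn g (Set.Ioi 0)) {x : ℝ} (hx : 0 < x) :
    (0:ℝ) ≤ ∫ ξ in Set.Ioi (0:ℝ),
      (1 - Real.cos (x * ξ) - min (ξ ^ 2 * x ^ 2) 4 / 4) * g ξ := by
  set h : ℝ → ℝ := fun ξ => 1 - Real.cos (x * ξ) - min (ξ ^ 2 * x ^ 2) 4 / 4 with hh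
  have hhcont : Continuous h := by
    apply Continuous.sub
    · fun_prop
    · exact (((continuous_pow 2).mul continuous_const).min continuous_const).div_const 4
  have hhbd : ∀ ξ, |h ξ| ≤ 3 := by
    intro ξ
    have h1 : 0 ≤ min (ξ ^ 2 * x ^ 2) 4 := le_min (by positivity) (by norm_num)
    have h2 : min (ξ ^ 2 * x ^ 2) 4 ≤ 4 := min_le_right _ _
    have h3 := Real.cos_le_one (x * ξ)
    have h4 := Real.neg_one_le_cos (x * ξ)
    rw [abs_le]; constructor <;> simp only [hh] <;> nlinarith
  set g' : ℝ → ℝ := hint.aestronglyMeasurable.mk g with hg'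
  have hsm : StronglyMeasurable g' := hint.aestronglyMeasurable.stronglyMeasurable_mk
  have hae : g =ᵐ[volume] g' := hint.aestronglyMeasurable.ae_eq_mk
  have hg'int : Integrable g' := hint.congr hae
  set f : ℝ → ℝ → ℝ := fun ξ t =>
    Set.indicator (Set.Ioi 0) h ξ * Set.indicator (Set.Ioo 0 (g' ξ)) (fun _ => (1:ℝ)) t with hf
  -- measurability of uncurried f
  have hA : MeasurableSet {p : ℝ × ℝ | 0 < p.2 ∧ p.2 < g' p.1} := by
    have hm1 : Measurable fun p : ℝ × ℝ => g' p.1 := hsm.measurable.comp measurable_fst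
    exact (measurableSet_lt measurable_const measurable_snd).inter
      (measurableSet_lt measurable_snd hm1)
  have huncurry : Measurable (Function.uncurry f) := by
    have h1 : Measurable fun p : ℝ × ℝ => Set.indicator (Set.Ioi 0) h p.1 :=
      (hhcont.measurable.indicator measurableSet_Ioi).comp measurable_fst
    have h2 : Measurable fun p : ℝ × ℝ =>
        Set.indicator {p : ℝ × ℝ | 0 < p.2 ∧ p.2 < g' p.1} (fun _ => (1:ℝ)) p :=
      measurable_const.indicator hA
    have : Function.uncurry f = fun p : ℝ × ℝ =>
        Set.indicator (Set.Ioi 0) h p.1 *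
          Set.indicator {p : ℝ × ℝ | 0 < p.2 ∧ p.2 < g' p.1} (fun _ => (1:ℝ)) p := by
      funext p
      simp only [Function.uncurry, hf, Set.indicator_apply, Set.mem_Ioo, Set.mem_setOf_eq]
    rw [this]
    exact h1.mul h2
  -- sections in t
  have hsec : ∀ ξ, (∫ t, f ξ t) = Set.indicator (Set.Ioi 0) h ξ * max (g' ξ) 0 := by
    intro ξ
    rw [integral_const_mul, MeasureTheory.integral_indicator_const (1:ℝ) measurableSet_Ioo]
    simp [Real.volume_Ioo, ENNReal.toReal_ofReal']
  have hsecnorm : ∀ ξ, (∫ t, ‖f ξ t‖) = ‖Set.indicator (Set.Ioi 0) h ξ‖ * max (g' ξ) 0 := by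
    intro ξ
    have : ∀ t, ‖f ξ t‖ = ‖Set.indicator (Set.Ioi 0) h ξ‖ *
        Set.indicator (Set.Ioo 0 (g' ξ)) (fun _ => (1:ℝ)) t := by
      intro t
      simp only [hf, norm_mul]
      congr 1
      simp [Set.indicator_apply, apply_ite (‖·‖)]
    simp_rw [this]
    rw [integral_const_mul, MeasureTheory.integral_indicator_const (1:ℝ) measurableSet_Ioo]
    simp [Real.volume_Ioo, ENNReal.toReal_ofReal']
  -- integrability of uncurried f
  have hintf : Integrable (Function.uncurry f) (volume.prod volume) := by
    rw [integrable_prod_iff huncurry.aestronglyMeasurable]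
    constructor
    · refine Filter.Eventually.of_forall (fun ξ => ?_)
      have : Integrable (Set.indicator (Set.Ioo 0 (g' ξ)) (fun _ => (1:ℝ))) := by
        rw [integrable_indicator_iff measurableSet_Ioo]
        exact integrableOn_const measure_Ioo_lt_top.ne
      have h2 : Integrable (fun t => Set.indicator (Set.Ioi 0) h ξ *
          Set.indicator (Set.Ioo 0 (g' ξ)) (fun _ => (1:ℝ)) t) volume := this.const_mul _
      exact h2
    · have hmeas : AEStronglyMeasurable (fun ξ => ∫ t, ‖Function.uncurry f (ξ, t)‖) volume :=
        huncurry.aestronglyMeasurable.norm.integral_prod_right'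
      refine ((hg'int.abs.const_mul 3).mono hmeas ?_)
      refine Filter.Eventually.of_forall (fun ξ => ?_)
      have hval : (∫ t, ‖Function.uncurry f (ξ, t)‖) =
          ‖Set.indicator (Set.Ioi 0) h ξ‖ * max (g' ξ) 0 := hsecnorm ξ
      have hb1 : ‖Set.indicator (Set.Ioi 0) h ξ‖ ≤ 3 := by
        rw [Real.norm_eq_abs]
        by_cases hξ : ξ ∈ Set.Ioi (0:ℝ)
        · rw [Set.indicator_of_mem hξ]; exact hhbd ξ
        · rw [Set.indicator_of_notMem hξ]; norm_num
      have hb2 : max (g' ξ) 0 ≤ |g' ξ| := max_le (le_abs_self _) (abs_nonneg _)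
      have hnn : 0 ≤ ‖Set.indicator (Set.Ioi 0) h ξ‖ * max (g' ξ) 0 :=
        mul_nonneg (norm_nonneg _) (le_max_right _ _)
      calc ‖∫ t, ‖Function.uncurry f (ξ, t)‖‖
          = ‖Set.indicator (Set.Ioi 0) h ξ‖ * max (g' ξ) 0 := by
            rw [Real.norm_eq_abs, hval]; exact abs_of_nonneg hnn
        _ ≤ 3 * max (g' ξ) 0 := mul_le_mul_of_nonneg_right hb1 (le_max_right _ _)
        _ ≤ 3 * |g' ξ| := by linarith
        _ ≤ ‖3 * |g' ξ|‖ := le_abs_self _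
  -- swap
  have hswap : (∫ ξ, ∫ t, f ξ t) = ∫ t, ∫ ξ, f ξ t := integral_integral_swap hintf
  -- left side is the target integral
  have hleft : (∫ ξ, ∫ t, f ξ t) = ∫ ξ in Set.Ioi (0:ℝ), h ξ * g ξ := by
    rw [← MeasureTheory.integral_indicator measurableSet_Ioi]
    apply integral_congr_ae
    filter_upwards [hae] with ξ hξ
    rw [hsec ξ]
    by_cases hmem : ξ ∈ Set.Ioi (0:ℝ)
    · rw [Set.indicator_of_mem hmem, Set.indicator_of_mem hmem, ← hξ,
        max_eq_left (hpos ξ).le]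
    · rw [Set.indicator_of_notMem hmem, Set.indicator_of_notMem hmem, zero_mul]
  -- right side is nonneg
  have hright : (0:ℝ) ≤ ∫ t, ∫ ξ, f ξ t := by
    refine integral_nonneg fun t => ?_
    show (0:ℝ) ≤ ∫ ξ, f ξ t
    by_cases ht : 0 < t
    · -- the section in ξ
      set S₀ : Set ℝ := {ξ | 0 < ξ ∧ t < g ξ} with hS₀
      have hfeq : (fun ξ => f ξ t) =ᵐ[volume] Set.indicator S₀ h := by
        filter_upwards [hae] with ξ hξ
        simp only [hf, Set.indicator_apply, Set.mem_Ioo, Set.mem_Ioi, hS₀, Set.mem_setOf_eq,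
          ← hξ]
        by_cases h1 : 0 < ξ <;> by_cases h2 : t < g ξ <;> simp [h1, h2, ht, mul_comm]
      rw [integral_congr_ae hfeq]
      -- now S₀ is essentially an interval
      rcases Set.eq_empty_or_nonempty S₀ with hS | hS
      · rw [hS]; simp
      · have hfin : volume {ξ : ℝ | t ≤ g ξ} < ⊤ := hint.measure_ge_lt_top ht
        have hdown : ∀ b ∈ S₀, Set.Ioo (0:ℝ) b ⊆ S₀ := by
          intro b hb ξ hξ
          exact ⟨hξ.1, lt_of_lt_of_le hb.2 (hmono hξ.1 (lt_trans hξ.1 hξ.2) hξ.2.le)⟩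
        have hbdd : BddAbove S₀ := by
          refine ⟨(volume {ξ : ℝ | t ≤ g ξ}).toReal, fun b hb => ?_⟩
          have h1 : volume (Set.Ioo (0:ℝ) b) ≤ volume {ξ : ℝ | t ≤ g ξ} := by
            apply measure_mono
            intro ξ hξ
            exact le_of_lt (hdown b hb hξ).2
          rw [Real.volume_Ioo, sub_zero] at h1
          exact (ENNReal.ofReal_le_iff_le_toReal hfin.ne).mp h1
        set r := sSup S₀ with hr
        obtain ⟨a, ha⟩ := hS
        have hr0 : 0 < r := lt_of_lt_of_le ha.1 (le_csSup hbdd ha)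
        have hsub1 : Set.Ioo (0:ℝ) r ⊆ S₀ := by
          intro ξ hξ
          obtain ⟨b, hb, hξb⟩ := exists_lt_of_lt_csSup ⟨a, ha⟩ hξ.2
          exact hdown b hb ⟨hξ.1, hξb⟩
        have hsub2 : S₀ ⊆ Set.Ioc (0:ℝ) r := fun b hb => ⟨hb.1, le_csSup hbdd hb⟩
        have hind : Set.indicator S₀ h =ᵐ[volume] Set.indicator (Set.Ioo 0 r) h := by
          rw [Filter.EventuallyEq, ae_iff]
          apply measure_mono_null _ (measure_singleton r)
          intro ξ hξ
          simp only [Set.mem_setOf_eq] at hξ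
          by_contra hne
          simp only [Set.mem_singleton_iff] at hne
          apply hξ
          by_cases hmem : ξ ∈ S₀
          · have h1 : ξ ∈ Set.Ioo (0:ℝ) r := ⟨(hsub2 hmem).1,
              lt_of_le_of_ne (hsub2 hmem).2 hne⟩
            rw [Set.indicator_of_mem hmem, Set.indicator_of_mem h1]
          · have h1 : ξ ∉ Set.Ioo (0:ℝ) r := fun hc => hmem (hsub1 hc)
            rw [Set.indicator_of_notMem hmem, Set.indicator_of_notMem h1]
        rw [integral_congr_ae hind, MeasureTheory.integral_indicator measurableSet_Ioo,
          ← MeasureTheory.integral_Ioc_eq_integral_Ioo,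
          ← intervalIntegral.integral_of_le hr0.le]
        exact lemA hx hr0.le
    · have hz : ∀ ξ, f ξ t = 0 := by
        intro ξ
        have hnm : t ∉ Set.Ioo (0:ℝ) (g' ξ) := fun hc => ht hc.1
        simp only [hf, Set.indicator_of_notMem hnm, mul_zero]
      rw [show (fun ξ : ℝ => f ξ t) = fun _ => (0:ℝ) from funext hz]
      simp
  rw [hswap] at hleft
  have hfin2 : (0:ℝ) ≤ ∫ ξ in Set.Ioi (0:ℝ), h ξ * g ξ := hleft ▸ hright
  exact hfin2

theorem fourier_diff_lower (g : ℝ → ℝ)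
    (hpos : ∀ ξ : ℝ, 0 < g ξ)
    (hint : Integrable g)
    (hmono : AntitoneOn g (Set.Ioi 0))
    (heven : ∀ ξ : ℝ, g (-ξ) = g ξ) :
    ∀ x : ℝ,
      (1 / 2) * ∫ ξ in Set.Ioi (0:ℝ), min (ξ ^ 2 * x ^ 2) 4 * g ξ ≤
        (∫ ξ : ℝ, g ξ) - (∫ ξ : ℝ, g ξ * Real.cos (x * ξ)) := by
  intro x
  rcases eq_or_ne x 0 with rfl | hxne
  · simp
  set y := |x| with hy
  have hy0 : 0 < y := abs_pos.mpr hxne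
  have hysq : y ^ 2 = x ^ 2 := sq_abs x
  have hycos : ∀ ξ : ℝ, Real.cos (y * ξ) = Real.cos (x * ξ) := by
    intro ξ
    rcases abs_choice x with h | h
    · rw [hy, h]
    · rw [hy, h, neg_mul, Real.cos_neg]
  have hgabs : (fun ξ : ℝ => g |ξ|) = g := by
    funext ξ
    rcases abs_choice ξ with h | h
    · rw [h]
    · rw [h, heven]
  have e1 : (∫ ξ : ℝ, g ξ) = 2 * ∫ ξ in Set.Ioi (0:ℝ), g ξ := by
    rw [← integral_comp_abs (f := g), hgabs]
  have e2 : (∫ ξ : ℝ, g ξ * Real.cos (x * ξ)) =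
      2 * ∫ ξ in Set.Ioi (0:ℝ), g ξ * Real.cos (x * ξ) := by
    rw [← integral_comp_abs (f := fun ξ => g ξ * Real.cos (x * ξ))]
    congr 1
    funext ξ
    rcases abs_choice ξ with h | h
    · rw [h]
    · rw [h, heven, mul_neg, Real.cos_neg]
  have hIg : IntegrableOn g (Set.Ioi 0) := hint.integrableOn
  have hcosA : IntegrableOn (fun ξ => (1 - Real.cos (y * ξ)) * g ξ) (Set.Ioi 0) := by
    apply hIg.bdd_mul (c := 2)
    · exact Continuous.aestronglyMeasurable (by fun_prop)
    · refine Filter.Eventually.of_forall (fun ξ => ?_)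
      rw [Real.norm_eq_abs, abs_le]
      constructor <;> nlinarith [Real.cos_le_one (y * ξ), Real.neg_one_le_cos (y * ξ)]
  have hminA : IntegrableOn (fun ξ => min (ξ ^ 2 * y ^ 2) 4 / 4 * g ξ) (Set.Ioi 0) := by
    apply hIg.bdd_mul (c := 1)
    · refine Continuous.aestronglyMeasurable ?_
      exact (((continuous_pow 2).mul continuous_const).min continuous_const).div_const 4
    · refine Filter.Eventually.of_forall (fun ξ => ?_)
      have h1 : 0 ≤ min (ξ ^ 2 * y ^ 2) 4 := le_min (by positivity) (by norm_num)
      have h2 : min (ξ ^ 2 * y ^ 2) 4 ≤ 4 := min_le_right _ _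
      rw [Real.norm_eq_abs, abs_le]
      constructor <;> nlinarith
  have hgcos : IntegrableOn (fun ξ => g ξ * Real.cos (x * ξ)) (Set.Ioi 0) := by
    have h1 : IntegrableOn (fun ξ => Real.cos (x * ξ) * g ξ) (Set.Ioi 0) := by
      apply hIg.bdd_mul (c := 1)
      · exact Continuous.aestronglyMeasurable (by fun_prop)
      · exact Filter.Eventually.of_forall (fun ξ => by rw [Real.norm_eq_abs]; exact Real.abs_cos_le_one _)
    exact h1.congr (Filter.Eventually.of_forall fun ξ => by ring)
  have hcore := core g hpos hint hmono hy0
  have hsplit : (∫ ξ in Set.Ioi (0:ℝ),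
        (1 - Real.cos (y * ξ) - min (ξ ^ 2 * y ^ 2) 4 / 4) * g ξ)
      = (∫ ξ in Set.Ioi (0:ℝ), (1 - Real.cos (y * ξ)) * g ξ)
        - ∫ ξ in Set.Ioi (0:ℝ), min (ξ ^ 2 * y ^ 2) 4 / 4 * g ξ := by
    rw [← integral_sub hcosA hminA]
    congr 1
    funext ξ
    ring
  have hsub2 : (∫ ξ in Set.Ioi (0:ℝ), (1 - Real.cos (y * ξ)) * g ξ)
      = (∫ ξ in Set.Ioi (0:ℝ), g ξ) - ∫ ξ in Set.Ioi (0:ℝ), g ξ * Real.cos (x * ξ) := by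
    rw [← integral_sub hIg hgcos]
    congr 1
    funext ξ
    rw [hycos ξ]
    ring
  have h4 : (∫ ξ in Set.Ioi (0:ℝ), min (ξ ^ 2 * y ^ 2) 4 / 4 * g ξ)
      = (1 / 4) * ∫ ξ in Set.Ioi (0:ℝ), min (ξ ^ 2 * x ^ 2) 4 * g ξ := by
    rw [← integral_const_mul]
    congr 1
    funext ξ
    rw [← hysq]
    ring
  rw [e1, e2]
  linarith [hcore, hsplit, hsub2, h4]
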